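/- Suppose g ≡ 0 and dom φ = ℝⁿ. Let x ∈ ℝⁿ, λ > 0, 0 < c₁ < c₂ < 1, let y be the minimizer over ℝⁿ of u ↦ ⟨∇f(x), u − x⟩ + (1/(2λ))⟨∇²φ(x)(u − x), u − x⟩, set d = y − x with d ≠ 0, and define A(t) = f(x + t d) − f(x) − c₁ t (⟨∇f(x), d⟩ + (1/(2λ))⟨∇²φ(x)d, d⟩) and W(t) = ⟨∇f(x + t d), d⟩ − c₂⟨∇f(x), d⟩. If 0 < t_α < t_β satisfy A(t_α) < 0 and A(t_β) ≥ 0, then there exists a nonempty interval [t̃_α, t̃_β] ⊆ [t_α, t_β] with t̃_α < t̃_β such that A(t) < 0 and W(t) > 0 for all t ∈ [t̃_α, t̃_β]. -/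

import Mathlib

open Set Filter Topology
open scoped RealInnerProductSpace

/-- between a point where `A < 0` and a point where `A ≥ 0`
there is a nonempty interval of Armijo--Wolfe steps (case `g ≡ 0`). -/
theorem stmt14
    {E : Type*} [NormedAddCommGroup E] [InnerProductSpace ℝ E] [FiniteDimensional ℝ E]
    (φ f : E → ℝ) (φ' f' : E → E) (Hφ : E → E →L[ℝ] E) (σ : ℝ) (hσ : 0 < σ)
    (hφconv : ConvexOn ℝ Set.univ φ)
    (hφ'grad : ∀ z, HasGradientAt φ (φ' z) z)
    (hφ'' : ∀ z, HasFDerivAt φ' (Hφ z) z)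
    (hφ''cont : Continuous Hφ)
    (hφstrong : ∀ z u : E, σ * ‖u‖ ^ 2 ≤ ⟪Hφ z u, u⟫)
    (hf'grad : ∀ z, HasGradientAt f (f' z) z)
    (hf'cont : Continuous f')
    (x : E) (lam : ℝ) (hlam : 0 < lam)
    (c₁ c₂ : ℝ) (hc₁ : 0 < c₁) (hc₁₂ : c₁ < c₂) (hc₂ : c₂ < 1)
    (y : E)
    (hymin : IsMinOn (fun u => ⟪f' x, u - x⟫ +
      (1 / (2 * lam)) * ⟪Hφ x (u - x), u - x⟫) Set.univ y)
    (d : E) (hd : d = y - x) (hdne : d ≠ 0)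
    (A W : ℝ → ℝ)
    (hA : ∀ t, A t = f (x + t • d) - f x - c₁ * t *
      (⟪f' x, d⟫ + (1 / (2 * lam)) * ⟪Hφ x d, d⟫))
    (hW : ∀ t, W t = ⟪f' (x + t • d), d⟫ - c₂ * ⟪f' x, d⟫)
    (tα tβ : ℝ) (htα : 0 < tα) (htαβ : tα < tβ)
    (hAα : A tα < 0) (hAβ : 0 ≤ A tβ) :
    ∃ ttα ttβ : ℝ, tα ≤ ttα ∧ ttα < ttβ ∧ ttβ ≤ tβ ∧
      ∀ t ∈ Icc ttα ttβ, A t < 0 ∧ 0 < W t := by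
  have hdnorm : (0:ℝ) < ‖d‖ := norm_pos_iff.mpr hdne
  have hy : y = x + d := by rw [hd]; abel
  have hhpos : 0 < ⟪Hφ x d, d⟫ := lt_of_lt_of_le (by positivity) (hφstrong x d)
  -- the minimizer condition gives the key identity
  have hrel : (1/lam) * ⟪Hφ x d, d⟫ = 2 * ((1/(2*lam)) * ⟪Hφ x d, d⟫) := by
    field_simp
  have hL : ⟪f' x, d⟫ + (1/lam) * ⟪Hφ x d, d⟫ = 0 := by
    set M := (1/(2*lam)) * ⟪Hφ x d, d⟫ with hMdef
    set L := ⟪f' x, d⟫ + 2 * M with hLdef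
    have hMpos : 0 < M := by
      have : 0 < 1/(2*lam) := by positivity
      exact mul_pos this hhpos
    have key : ∀ s : ℝ, 0 ≤ s * L + s^2 * M := by
      intro s
      have h1 := isMinOn_iff.mp hymin (y + s • d) (mem_univ _)
      have e1 : y + s • d - x = (1+s) • d := by rw [hy]; module
      have e2 : y - x = d := by rw [hy]; abel
      rw [e1, e2] at h1
      rw [map_smul, real_inner_smul_left, real_inner_smul_right,
        real_inner_smul_right] at h1
      rw [hLdef, hMdef]
      nlinarith [h1]
    have hkey := key (-L/(2*M))
    have hL2 : L^2 ≤ 0 := by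
      have hM' : M ≠ 0 := ne_of_gt hMpos
      have heq : -L/(2*M) * L + (-L/(2*M))^2 * M = -L^2/(4*M) := by
        field_simp; ring
      rw [heq] at hkey
      have h4 : (0:ℝ) < 4*M := by linarith
      have h5 : (0:ℝ) ≤ -L^2/(4*M) * (4*M) := mul_nonneg hkey h4.le
      rw [div_mul_cancel₀ _ (ne_of_gt h4)] at h5
      linarith
    have hL0 : L = 0 := pow_eq_zero_iff (by norm_num) |>.mp
      (le_antisymm hL2 (sq_nonneg L))
    rw [hrel]
    rw [hLdef] at hL0
    linarith [hL0]
  set q : ℝ := ⟪f' x, d⟫ + (1/(2*lam)) * ⟪Hφ x d, d⟫ with hqdef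
  have hq2 : (1/(2*lam)) * ⟪Hφ x d, d⟫ = (1/2) * ((1/lam) * ⟪Hφ x d, d⟫) := by ring
  have hhalfpos : 0 < (1/(2*lam)) * ⟪Hφ x d, d⟫ := by
    have : 0 < 1/(2*lam) := by positivity
    exact mul_pos this hhpos
  have hqneg : q < 0 := by rw [hqdef]; linarith
  have had : ⟪f' x, d⟫ = 2 * q := by rw [hqdef]; linarith
  -- derivative of A
  have hline : ∀ t : ℝ, HasDerivAt (fun t : ℝ => x + t • d) d t := fun t => by
    simpa using ((hasDerivAt_id t).smul_const d).const_add x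
  have hfd : ∀ t : ℝ, HasDerivAt (fun t => f (x + t • d)) ⟪f' (x + t • d), d⟫ t := by
    intro t
    have := (hf'grad (x + t • d)).hasFDerivAt.comp_hasDerivAt t (hline t)
    exact this
  have hAfun : A = fun t => f (x + t • d) - f x - c₁ * t * q := funext hA
  have hAderiv : ∀ t : ℝ, HasDerivAt A (⟪f' (x + t • d), d⟫ - c₁ * q) t := by
    intro t
    rw [hAfun]
    exact ((hfd t).sub_const (f x)).sub
      (by simpa using ((hasDerivAt_id t).const_mul c₁).mul_const q)
  have contA : Continuous A :=
    continuous_iff_continuousAt.mpr fun t => (hAderiv t).continuousAt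
  have contW : Continuous W := by
    have : W = fun t => ⟪f' (x + t • d), d⟫ - c₂ * ⟪f' x, d⟫ := funext hW
    rw [this]
    exact ((hf'cont.comp (continuous_const.add
      (continuous_id.smul continuous_const))).inner continuous_const).sub continuous_const
  -- the first crossing point
  set S : Set ℝ := Icc tα tβ ∩ {t | 0 ≤ A t} with hSdef
  have hSclosed : IsClosed S := isClosed_Icc.inter (isClosed_le continuous_const contA)
  have hSne : S.Nonempty := ⟨tβ, ⟨htαβ.le, le_refl _⟩, hAβ⟩
  have hSbdd : BddBelow S := ⟨tα, fun t ht => ht.1.1⟩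
  set th := sInf S with hthdef
  have hthS : th ∈ S := hSclosed.csInf_mem hSne hSbdd
  have hthβ : th ≤ tβ := hthS.1.2
  have hth_gt : tα < th := by
    refine lt_of_le_of_ne (le_csInf hSne fun t ht => ht.1.1) ?_
    intro e
    have := hthS.2
    rw [← e] at this
    exact absurd this (not_le.mpr hAα)
  have hneg : ∀ t, tα ≤ t → t < th → A t < 0 := by
    intro t h1 h2
    by_contra hc
    push_neg at hc
    have hmem : t ∈ S := ⟨⟨h1, (h2.trans_le hthβ).le⟩, hc⟩
    exact absurd (csInf_le hSbdd hmem) (not_le.mpr h2)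
  -- mean value theorem
  obtain ⟨ξ, hξ, hslope⟩ := exists_hasDerivAt_eq_slope A
    (fun t => ⟪f' (x + t • d), d⟫ - c₁ * q) hth_gt contA.continuousOn
    (fun t _ => hAderiv t)
  have hξα : tα < ξ := hξ.1
  have hξth : ξ < th := hξ.2
  have hAξ : A ξ < 0 := hneg ξ hξα.le hξth
  have hslopepos : 0 < (A th - A tα) / (th - tα) :=
    div_pos (by have hAth : (0:ℝ) ≤ A th := hthS.2; linarith) (by linarith)
  have hderivpos : 0 < ⟪f' (x + ξ • d), d⟫ - c₁ * q := by rw [hslope]; exact hslopepos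
  have hWξ : 0 < W ξ := by
    rw [hW ξ, had]
    nlinarith [hderivpos, mul_pos (neg_pos.mpr hqneg) (show (0:ℝ) < 2*c₂ - c₁ by linarith)]
  -- find a small interval around ξ
  have h1 : ∀ᶠ t in 𝓝 ξ, A t < 0 := contA.continuousAt.eventually_lt continuousAt_const hAξ
  have h2 : ∀ᶠ t in 𝓝 ξ, 0 < W t := continuousAt_const.eventually_lt contW.continuousAt hWξ
  obtain ⟨ε, hε, hball⟩ := Metric.eventually_nhds_iff.mp (h1.and h2)
  have hξβ : ξ < tβ := hξth.trans_le hthβ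
  set δ := min (ε/2) ((tβ - ξ)/2) with hδdef
  have hδpos : 0 < δ := lt_min (by linarith) (by linarith)
  have hδ1 : δ ≤ ε/2 := min_le_left _ _
  have hδ2 : δ ≤ (tβ - ξ)/2 := min_le_right _ _
  refine ⟨ξ, ξ + δ, hξα.le, by linarith, by linarith, ?_⟩
  intro t ht
  apply hball
  rw [Real.dist_eq, abs_lt]
  constructor <;> [linarith [ht.1]; linarith [ht.2]]
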